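/- Let $\phi_{F++}(\mathbf{z}) = \frac{D}{\sqrt{r}}\left(\exp(-\widehat{A}\|\omega_i\|^2 + B\,\omega_i^\top \mathbf{z} + C\|\mathbf{z}\|^2)\right)_{i=1}^r$ with $\omega_1,\dots,\omega_r \sim \mathcal{N}(0, I_N)$ i.i.d., $\widehat{A} > 0$, $B = \sqrt{1+4\widehat{A}}$, $C = -\frac{1}{2}$, $D = (1+4\widehat{A})^{N/4}$. Then for all $\mathbf{x}, \mathbf{y} \in \mathbb{R}^N$, $\mathbb{E}[\phi_{F++}(\mathbf{x})^\top \phi_{F++}(\mathbf{y})] = \exp(\mathbf{x}^\top \mathbf{y})$, i.e., the FAVOR++ random features give an unbiased estimator of the softmax kernel. -/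

import Mathlib

open MeasureTheory ProbabilityTheory Real
open Complex
open scoped NNReal ENNReal

lemma integrable_rexp_quadratic' {a : ℝ} (ha : 0 < a) (b : ℝ) :
    Integrable fun x : ℝ => rexp (-a * x ^ 2 + b * x) := by
  have h := integrable_cexp_quadratic' (b := (-a : ℂ)) (by simpa using ha) (b : ℂ) 0
  refine h.re.congr (Filter.Eventually.of_forall fun t => ?_)
  have h1 : ((-a : ℂ) * (t:ℂ) ^ 2 + (b:ℂ) * (t:ℂ) + 0) = ((-a * t ^ 2 + b * t : ℝ) : ℂ) := by
    push_cast; ring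
  show RCLike.re (Complex.exp ((-a : ℂ) * (t:ℂ) ^ 2 + (b:ℂ) * (t:ℂ) + 0)) = _
  rw [h1, ← Complex.ofReal_exp]
  exact Complex.ofReal_re _

lemma integral_rexp_quadratic' {a : ℝ} (ha : 0 < a) (b : ℝ) :
    ∫ x : ℝ, rexp (-a * x ^ 2 + b * x) = Real.sqrt (π / a) * rexp (b ^ 2 / (4 * a)) := by
  have h := integral_cexp_quadratic (b := (-a : ℂ)) (by simpa using ha) (b : ℂ) 0
  have hπ : (0:ℝ) ≤ π / a := div_nonneg pi_pos.le ha.le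
  have hfun : (fun x : ℝ => Complex.exp ((-a : ℂ) * (x:ℂ) ^ 2 + (b:ℂ) * (x:ℂ) + 0))
      = fun x : ℝ => ((rexp (-a * x ^ 2 + b * x) : ℝ) : ℂ) := by
    funext t
    have : ((-a : ℂ) * (t:ℂ) ^ 2 + (b:ℂ) * (t:ℂ) + 0) = ((-a * t ^ 2 + b * t : ℝ) : ℂ) := by
      push_cast; ring
    rw [this, Complex.ofReal_exp]
  have hR : ((π : ℂ) / -(-a : ℂ)) ^ (1 / 2 : ℂ) * Complex.exp (0 - (b:ℂ)^2 / (4 * (-a : ℂ)))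
      = ((Real.sqrt (π / a) * rexp (b ^ 2 / (4 * a)) : ℝ) : ℂ) := by
    have h1 : ((π : ℂ) / -(-a : ℂ)) = ((π / a : ℝ) : ℂ) := by push_cast; ring
    have h12 : (1/2 : ℂ) = ((1/2 : ℝ) : ℂ) := by norm_num
    rw [h1, h12, ← Complex.ofReal_cpow hπ]
    have h2 : (0 - (b:ℂ)^2 / (4 * (-a : ℂ))) = ((b ^ 2 / (4 * a) : ℝ) : ℂ) := by
      have : (a : ℂ) ≠ 0 := by exact_mod_cast ha.ne'
      push_cast; ring
    rw [h2, ← Complex.ofReal_exp, ← Complex.ofReal_mul]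
    congr 2
    rw [Real.sqrt_eq_rpow]
  rw [hfun, hR] at h
  simp_rw [← Complex.coe_algebraMap, RCLike.algebraMap_eq_ofReal, _root_.integral_ofReal] at h
  exact_mod_cast h

lemma gaussian_mgf' {a : ℝ} (ha : 0 < a) (b : ℝ) :
    ∫ t : ℝ, rexp (-a * t ^ 2 + b * t) ∂(gaussianReal 0 1)
      = (1 + 2 * a) ^ (-(1:ℝ)/2) * rexp (b ^ 2 / (2 * (1 + 2 * a))) := by
  rw [gaussianReal_of_var_ne_zero 0 one_ne_zero]
  have hpdf : gaussianPDF 0 1 = fun z => (((gaussianPDFReal 0 1 z).toNNReal : ℝ≥0) : ℝ≥0∞) := rfl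
  rw [hpdf, integral_withDensity_eq_integral_smul
    ((measurable_gaussianPDFReal 0 1).real_toNNReal) _]
  have heq : (fun z : ℝ => ((gaussianPDFReal 0 1 z).toNNReal : ℝ≥0) • rexp (-a * z ^ 2 + b * z))
      = fun z : ℝ => (√(2 * π))⁻¹ * rexp (-(a + 1/2) * z ^ 2 + b * z) := by
    funext z
    rw [NNReal.smul_def, Real.coe_toNNReal _ (gaussianPDFReal_nonneg 0 1 z)]
    simp only [gaussianPDFReal, NNReal.coe_one, mul_one, smul_eq_mul, sub_zero]
    rw [mul_assoc, ← Real.exp_add]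
    ring_nf
  rw [heq, integral_const_mul, integral_rexp_quadratic' (by linarith) b]
  have h2a : (0:ℝ) < 1 + 2 * a := by linarith
  have key : (√(2 * π))⁻¹ * Real.sqrt (π / (a + 1/2)) = (1 + 2 * a) ^ (-(1:ℝ)/2) := by
    rw [← Real.sqrt_inv, ← Real.sqrt_mul (by positivity)]
    have : (2 * π)⁻¹ * (π / (a + 1/2)) = (1 + 2*a)⁻¹ := by
      field_simp; ring
    rw [this, Real.sqrt_inv, Real.sqrt_eq_rpow, ← Real.rpow_neg h2a.le]
    norm_num
  rw [← mul_assoc, key]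
  congr 2
  ring

lemma integrable_gauss' {a : ℝ} (ha : 0 < a) (b : ℝ) :
    Integrable (fun t : ℝ => rexp (-a * t ^ 2 + b * t)) (gaussianReal 0 1) := by
  rw [gaussianReal_of_var_ne_zero 0 one_ne_zero]
  have hpdf : gaussianPDF 0 1 = fun z => (((gaussianPDFReal 0 1 z).toNNReal : ℝ≥0) : ℝ≥0∞) :=
    rfl
  rw [hpdf, integrable_withDensity_iff_integrable_smul
    ((measurable_gaussianPDFReal 0 1).real_toNNReal)]
  have heq : (fun z : ℝ => ((gaussianPDFReal 0 1 z).toNNReal : ℝ≥0) • rexp (-a * z ^ 2 + b * z))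
      = fun z : ℝ => (√(2 * π))⁻¹ * rexp (-(a + 1/2) * z ^ 2 + b * z) := by
    funext z
    rw [NNReal.smul_def, Real.coe_toNNReal _ (gaussianPDFReal_nonneg 0 1 z)]
    simp only [gaussianPDFReal, NNReal.coe_one, mul_one, smul_eq_mul, sub_zero]
    rw [mul_assoc, ← Real.exp_add]
    ring_nf
  rw [heq]
  exact (integrable_rexp_quadratic' (by linarith) b).const_mul _

lemma pi_integral_prod {ι E : Type*} [Fintype ι] [MeasurableSpace E] (μ : Measure E)
    [SigmaFinite μ] (f : ι → E → ℝ) :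
    ∫ v : ι → E, ∏ i, f i (v i) ∂(Measure.pi fun _ : ι => μ) = ∏ i, ∫ e, f i e ∂μ := by
  letI : MeasureSpace E := ⟨μ⟩
  exact MeasureTheory.integral_fintype_prod_eq_prod f
lemma pi_integrable_prod {ι E : Type*} [Fintype ι] [MeasurableSpace E] (μ : Measure E)
    [SigmaFinite μ] (f : ι → E → ℝ) (hf : ∀ i, Integrable (f i) μ) :
    Integrable (fun v : ι → E => ∏ i, f i (v i)) (Measure.pi fun _ : ι => μ) :=
  letI : MeasureSpace E := ⟨μ⟩
  MeasureTheory.Integrable.fintype_prod_dep hf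

set_option maxHeartbeats 1000000

/-- The FAVOR++ random feature map with `Â > 0`, `B = √(1+4Â)`, `C = -1/2`,
`D = (1+4Â)^(N/4)` and i.i.d. Gaussian projections `ω₁,…,ω_r ~ N(0,I_N)` gives an
unbiased estimator of the softmax kernel: `E[φ(x)ᵀφ(y)] = exp(xᵀy)`. -/
theorem favorPlusPlus_unbiased (N r : ℕ) (hr : 0 < r) (Ahat : ℝ) (hA : 0 < Ahat)
    (x y : Fin N → ℝ) :
    ∫ ω : Fin r → Fin N → ℝ,
        ∑ i : Fin r,
          ((1 + 4 * Ahat) ^ ((N : ℝ) / 4) / Real.sqrt r *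
            Real.exp (-Ahat * (∑ j, ω i j ^ 2) +
              Real.sqrt (1 + 4 * Ahat) * (∑ j, ω i j * x j) + (-(1 : ℝ)/2) * ∑ j, x j ^ 2)) *
          ((1 + 4 * Ahat) ^ ((N : ℝ) / 4) / Real.sqrt r *
            Real.exp (-Ahat * (∑ j, ω i j ^ 2) +
              Real.sqrt (1 + 4 * Ahat) * (∑ j, ω i j * y j) + (-(1 : ℝ)/2) * ∑ j, y j ^ 2))
        ∂(Measure.pi fun _ : Fin r => Measure.pi fun _ : Fin N => gaussianReal 0 1) =
      Real.exp (∑ j, x j * y j) := by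
  have hs : (0:ℝ) < 1 + 4 * Ahat := by linarith
  set s : ℝ := 1 + 4 * Ahat with hs_def
  have γ_def : True := trivial
  set g : Fin N → ℝ → ℝ :=
    fun j t => rexp (-(2 * Ahat) * t ^ 2 + Real.sqrt s * (x j + y j) * t) with hg
  set K0 : ℝ := s ^ ((N:ℝ)/4) * s ^ ((N:ℝ)/4) / r *
    rexp (-(1:ℝ)/2 * ∑ j, x j ^ 2 + -(1:ℝ)/2 * ∑ j, y j ^ 2) with hK0
  have hr' : (r:ℝ) ≠ 0 := Nat.cast_ne_zero.mpr hr.ne'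
  -- pointwise rewrite of the integrand
  have hpt : ∀ ω : Fin r → Fin N → ℝ,
      ∑ i : Fin r,
          (s ^ ((N : ℝ) / 4) / Real.sqrt r *
            rexp (-Ahat * (∑ j, ω i j ^ 2) +
              Real.sqrt s * (∑ j, ω i j * x j) + (-(1 : ℝ)/2) * ∑ j, x j ^ 2)) *
          (s ^ ((N : ℝ) / 4) / Real.sqrt r *
            rexp (-Ahat * (∑ j, ω i j ^ 2) +
              Real.sqrt s * (∑ j, ω i j * y j) + (-(1 : ℝ)/2) * ∑ j, y j ^ 2))
        = ∑ i : Fin r, K0 * ∏ j, g j (ω i j) := by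
    intro ω
    refine Finset.sum_congr rfl fun i _ => ?_
    have hsq : Real.sqrt r * Real.sqrt r = r := Real.mul_self_sqrt (Nat.cast_nonneg r)
    have hsplit : ∑ j, (-(2 * Ahat) * (ω i j) ^ 2 + Real.sqrt s * (x j + y j) * (ω i j))
        = -(2 * Ahat) * (∑ j, ω i j ^ 2) +
          (Real.sqrt s * (∑ j, ω i j * x j) + Real.sqrt s * (∑ j, ω i j * y j)) := by
      rw [Finset.mul_sum, Finset.mul_sum, Finset.mul_sum, ← Finset.sum_add_distrib,
        ← Finset.sum_add_distrib]
      exact Finset.sum_congr rfl fun j _ => by ring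
    have hexp : (-Ahat * (∑ j, ω i j ^ 2) +
              Real.sqrt s * (∑ j, ω i j * x j) + (-(1 : ℝ)/2) * ∑ j, x j ^ 2) +
          (-Ahat * (∑ j, ω i j ^ 2) +
              Real.sqrt s * (∑ j, ω i j * y j) + (-(1 : ℝ)/2) * ∑ j, y j ^ 2)
        = (-(1:ℝ)/2 * ∑ j, x j ^ 2 + -(1:ℝ)/2 * ∑ j, y j ^ 2) +
          ∑ j, (-(2 * Ahat) * (ω i j) ^ 2 + Real.sqrt s * (x j + y j) * (ω i j)) := by
      rw [hsplit]; ring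
    calc (s ^ ((N : ℝ) / 4) / Real.sqrt r *
            rexp (-Ahat * (∑ j, ω i j ^ 2) +
              Real.sqrt s * (∑ j, ω i j * x j) + (-(1 : ℝ)/2) * ∑ j, x j ^ 2)) *
          (s ^ ((N : ℝ) / 4) / Real.sqrt r *
            rexp (-Ahat * (∑ j, ω i j ^ 2) +
              Real.sqrt s * (∑ j, ω i j * y j) + (-(1 : ℝ)/2) * ∑ j, y j ^ 2))
        = s ^ ((N:ℝ)/4) * s ^ ((N:ℝ)/4) / (Real.sqrt r * Real.sqrt r) *
            (rexp (-Ahat * (∑ j, ω i j ^ 2) +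
              Real.sqrt s * (∑ j, ω i j * x j) + (-(1 : ℝ)/2) * ∑ j, x j ^ 2) *
              rexp (-Ahat * (∑ j, ω i j ^ 2) +
              Real.sqrt s * (∑ j, ω i j * y j) + (-(1 : ℝ)/2) * ∑ j, y j ^ 2)) := by
          ring
      _ = s ^ ((N:ℝ)/4) * s ^ ((N:ℝ)/4) / (Real.sqrt r * Real.sqrt r) *
            rexp ((-Ahat * (∑ j, ω i j ^ 2) +
              Real.sqrt s * (∑ j, ω i j * x j) + (-(1 : ℝ)/2) * ∑ j, x j ^ 2) +
              (-Ahat * (∑ j, ω i j ^ 2) +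
              Real.sqrt s * (∑ j, ω i j * y j) + (-(1 : ℝ)/2) * ∑ j, y j ^ 2)) := by
          rw [← Real.exp_add]
      _ = K0 * ∏ j, g j (ω i j) := by
          rw [hsq, hexp, Real.exp_add, Real.exp_sum, hK0]
          ring
  rw [show (∫ ω : Fin r → Fin N → ℝ,
      ∑ i : Fin r,
          (s ^ ((N : ℝ) / 4) / Real.sqrt r *
            rexp (-Ahat * (∑ j, ω i j ^ 2) +
              Real.sqrt s * (∑ j, ω i j * x j) + (-(1 : ℝ)/2) * ∑ j, x j ^ 2)) *
          (s ^ ((N : ℝ) / 4) / Real.sqrt r *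
            rexp (-Ahat * (∑ j, ω i j ^ 2) +
              Real.sqrt s * (∑ j, ω i j * y j) + (-(1 : ℝ)/2) * ∑ j, y j ^ 2)) ∂(Measure.pi fun _ : Fin r => Measure.pi fun _ : Fin N => gaussianReal 0 1))
      = ∫ ω, ∑ i : Fin r, K0 * ∏ j, g j (ω i j)
        ∂(Measure.pi fun _ : Fin r => Measure.pi fun _ : Fin N => gaussianReal 0 1) from
    integral_congr_ae (Filter.Eventually.of_forall hpt)]
  -- integrability of g j
  have hgint : ∀ j, Integrable (g j) (gaussianReal 0 1) := fun j =>
    integrable_gauss' (by linarith) _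
  -- the inner-product function on one block
  have hinner : Integrable (fun w : Fin N → ℝ => ∏ j, g j (w j)) (Measure.pi fun _ : Fin N => gaussianReal 0 1) :=
    pi_integrable_prod (gaussianReal 0 1) g hgint
  -- per-i block functions
  have hblockeq : ∀ i : Fin r, (fun ω : Fin r → Fin N → ℝ => ∏ j, g j (ω i j))
      = fun ω => ∏ k : Fin r,
          (fun k' (w : Fin N → ℝ) => if k' = i then ∏ j, g j (w j) else 1) k (ω k) := by
    intro i
    funext ω
    rw [Finset.prod_ite_eq' Finset.univ i (fun k => ∏ j, g j (ω k j))]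
    simp
  have hblockint : ∀ i : Fin r, Integrable (fun ω : Fin r → Fin N → ℝ =>
      K0 * ∏ j, g j (ω i j)) (Measure.pi fun _ : Fin r => Measure.pi fun _ : Fin N => gaussianReal 0 1) := by
    intro i
    refine Integrable.const_mul ?_ K0
    rw [hblockeq i]
    refine pi_integrable_prod (Measure.pi fun _ : Fin N => gaussianReal 0 1)
      (fun k' (w : Fin N → ℝ) => if k' = i then ∏ j, g j (w j) else 1) fun k => ?_
    by_cases hk : k = i
    · simpa [hk] using hinner
    · simp only [hk, if_false]
      exact integrable_const 1
  rw [integral_finset_sum Finset.univ fun i _ => hblockint i]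
  -- compute each block integral
  have hIi : ∀ i : Fin r, (∫ ω, K0 * ∏ j, g j (ω i j) ∂(Measure.pi fun _ : Fin r => Measure.pi fun _ : Fin N => gaussianReal 0 1))
      = K0 * ∏ j, ∫ t, g j t ∂(gaussianReal 0 1) := by
    intro i
    rw [integral_const_mul, hblockeq i, pi_integral_prod (Measure.pi fun _ : Fin N => gaussianReal 0 1)
      (fun k' (w : Fin N → ℝ) => if k' = i then ∏ j, g j (w j) else 1)]
    congr 1
    calc ∏ k : Fin r, ∫ w, (if k = i then ∏ j, g j (w j) else 1) ∂(Measure.pi fun _ : Fin N => gaussianReal 0 1)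
        = ∏ k : Fin r, (if k = i then ∫ w, ∏ j, g j (w j) ∂(Measure.pi fun _ : Fin N => gaussianReal 0 1) else 1) := by
          refine Finset.prod_congr rfl fun k _ => ?_
          by_cases hk : k = i
          · simp [hk]
          · simp [hk]
      _ = ∫ w, ∏ j, g j (w j) ∂(Measure.pi fun _ : Fin N => gaussianReal 0 1) := by
          rw [Finset.prod_ite_eq' Finset.univ i (fun _ => ∫ w, ∏ j, g j (w j) ∂(Measure.pi fun _ : Fin N => gaussianReal 0 1))]
          simp
      _ = ∏ j, ∫ t, g j t ∂(gaussianReal 0 1) := pi_integral_prod (gaussianReal 0 1) g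
  simp_rw [fun i : Fin r => hIi i]
  -- 1D integrals
  have hgj : ∀ j, (∫ t, g j t ∂(gaussianReal 0 1)) = s ^ (-(1:ℝ)/2) * rexp ((x j + y j) ^ 2 / 2) := by
    intro j
    rw [hg]
    rw [gaussian_mgf' (show (0:ℝ) < 2 * Ahat by linarith) (Real.sqrt s * (x j + y j))]
    have h1 : 1 + 2 * (2 * Ahat) = s := by rw [hs_def]; ring
    rw [h1]
    congr 1
    rw [mul_pow, Real.sq_sqrt hs.le]
    field_simp
  simp_rw [hgj]
  rw [Finset.prod_mul_distrib, Finset.prod_const, ← Real.exp_sum, Finset.card_univ,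
    Fintype.card_fin]
  have hpow : (s ^ (-(1:ℝ)/2)) ^ (N:ℕ) = s ^ ((-(1:ℝ)/2) * (N:ℝ)) := by
    rw [Real.rpow_mul hs.le, Real.rpow_natCast]
  rw [hpow, Finset.sum_const, Finset.card_univ, Fintype.card_fin, nsmul_eq_mul]
  -- final arithmetic
  have hD : s ^ ((N:ℝ)/4) * s ^ ((N:ℝ)/4) * s ^ ((-(1:ℝ)/2) * (N:ℝ)) = 1 := by
    rw [← Real.rpow_add hs, ← Real.rpow_add hs,
      show ((N:ℝ)/4 + (N:ℝ)/4 + (-(1:ℝ)/2) * (N:ℝ)) = 0 by ring, Real.rpow_zero]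
  have hS : ∑ j, ((x j + y j) ^ 2 / 2) =
      (∑ j, x j ^ 2) / 2 + (∑ j, x j * y j) + (∑ j, y j ^ 2) / 2 := by
    rw [Finset.sum_div, Finset.sum_div]
    rw [← Finset.sum_add_distrib, ← Finset.sum_add_distrib]
    exact Finset.sum_congr rfl fun j _ => by ring
  have hexp2 : (-(1:ℝ)/2 * ∑ j, x j ^ 2 + -(1:ℝ)/2 * ∑ j, y j ^ 2) +
      ∑ j, ((x j + y j) ^ 2 / 2) = ∑ j, x j * y j := by
    rw [hS]; ring
  calc (r : ℝ) * (K0 * (s ^ ((-(1:ℝ)/2) * (N:ℝ)) * rexp (∑ j, (x j + y j) ^ 2 / 2)))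
      = (s ^ ((N:ℝ)/4) * s ^ ((N:ℝ)/4) * s ^ ((-(1:ℝ)/2) * (N:ℝ))) * ((r:ℝ) / r) *
        rexp ((-(1:ℝ)/2 * ∑ j, x j ^ 2 + -(1:ℝ)/2 * ∑ j, y j ^ 2) +
          ∑ j, ((x j + y j) ^ 2 / 2)) := by
        rw [Real.exp_add, hK0]; ring
    _ = rexp (∑ j, x j * y j) := by
        rw [hD, div_self hr', hexp2, one_mul, one_mul]
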